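/- Let $G\in C^1(\mathbb{R}^{n+1}\setminus\{0\})$ be odd and positively homogeneous of degree $-n$, and let $F := \partial_j G$ for some $j\in\{1,\dots,n+1\}$. Then for every $a\in\mathbb{R}^n$ and every $t>0$: $\int_{\mathbb{R}^n} F(y, a\cdot y + t)\, dy = 0$. -/

import Mathlib

open MeasureTheory Filter Metric
open scoped RealInnerProductSpace Topology

section Main
variable {n : ℕ} {H : EuclideanSpace ℝ (Fin n) × ℝ → ℝ}

/-- Pointwise homogeneity of the derivative. -/
theorem fderiv_hom_aux
    (hdiff : ∀ x : EuclideanSpace ℝ (Fin n) × ℝ, x ≠ 0 → DifferentiableAt ℝ H x)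
    (hhom : ∀ l : ℝ, 0 < l → ∀ x : EuclideanSpace ℝ (Fin n) × ℝ, x ≠ 0 →
        H (l • x) = l ^ (-(n : ℝ)) * H x)
    {l : ℝ} (hl : 0 < l) {x : EuclideanSpace ℝ (Fin n) × ℝ} (hx : x ≠ 0)
    (v : EuclideanSpace ℝ (Fin n) × ℝ) :
    fderiv ℝ H (l • x) v = (l ^ (n + 1))⁻¹ * fderiv ℝ H x v := by
  have hlx : l • x ≠ 0 := smul_ne_zero (ne_of_gt hl) hx
  have h1 : HasFDerivAt (fun z => H (l • z))
      ((fderiv ℝ H (l • x)).comp (l • ContinuousLinearMap.id ℝ _)) x := by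
    have := ((hdiff (l • x) hlx).hasFDerivAt).comp x
      ((hasFDerivAt_id x).const_smul l)
    simp at this ⊢
    exact this
  have h2 : HasFDerivAt (fun z => l ^ (-(n : ℝ)) * H z)
      (l ^ (-(n : ℝ)) • fderiv ℝ H x) x := ((hdiff x hx).hasFDerivAt).const_mul _
  have heq : (fun z => H (l • z)) =ᶠ[𝓝 x] (fun z => l ^ (-(n : ℝ)) * H z) := by
    have hopen : IsOpen {z : EuclideanSpace ℝ (Fin n) × ℝ | z ≠ 0} := isOpen_ne
    filter_upwards [hopen.mem_nhds hx] with z hz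
    exact hhom l hl z hz
  have h3 := (h1.congr_of_eventuallyEq heq.symm).unique h2
  have h4 := congrArg (fun (L : (EuclideanSpace ℝ (Fin n) × ℝ) →L[ℝ] ℝ) => L v) h3
  simp only [ContinuousLinearMap.coe_comp', Function.comp_apply,
    ContinuousLinearMap.coe_smul', Pi.smul_apply, ContinuousLinearMap.smul_apply,
    ContinuousLinearMap.coe_id', id_eq] at h4
  -- h4 : fderiv ℝ H (l • x) (l • v) = l ^ (-(n:ℝ)) • fderiv ℝ H x v
  rw [(fderiv ℝ H (l • x)).map_smul, smul_eq_mul, smul_eq_mul] at h4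
  have hrp : l ^ (-(n : ℝ)) = (l ^ n)⁻¹ := by
    rw [Real.rpow_neg hl.le, Real.rpow_natCast]
  rw [hrp] at h4
  have hln : (0:ℝ) < l ^ n := pow_pos hl n
  rw [pow_succ, mul_inv]
  field_simp at h4 ⊢
  nlinarith [h4, hln]

theorem norm_fderiv_bound
    (hdiff : ∀ x : EuclideanSpace ℝ (Fin n) × ℝ, x ≠ 0 → DifferentiableAt ℝ H x)
    (hC1 : ContinuousOn (fderiv ℝ H) {x | x ≠ 0})
    (hhom : ∀ l : ℝ, 0 < l → ∀ x : EuclideanSpace ℝ (Fin n) × ℝ, x ≠ 0 →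
        H (l • x) = l ^ (-(n : ℝ)) * H x) :
    ∃ C : ℝ, 0 ≤ C ∧ ∀ x : EuclideanSpace ℝ (Fin n) × ℝ, x ≠ 0 → ∀ v,
      ‖fderiv ℝ H x v‖ ≤ C * ‖v‖ / ‖x‖ ^ (n + 1) := by
  obtain ⟨C, hC⟩ : ∃ C, ∀ x ∈ sphere (0 : EuclideanSpace ℝ (Fin n) × ℝ) 1,
      ‖fderiv ℝ H x‖ ≤ C := by
    apply (isCompact_sphere 0 1).exists_bound_of_continuousOn
    exact hC1.mono (fun x hx => by
      simp only [mem_sphere_iff_norm, sub_zero] at hx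
      simp only [Set.mem_setOf_eq]
      intro h; rw [h] at hx; simp at hx)
  refine ⟨max C 0, le_max_right _ _, fun x hx v => ?_⟩
  have hnx : 0 < ‖x‖ := norm_pos_iff.2 hx
  set y : EuclideanSpace ℝ (Fin n) × ℝ := ‖x‖⁻¹ • x with hy
  have hy0 : y ≠ 0 := smul_ne_zero (by positivity) hx
  have hys : y ∈ sphere (0 : EuclideanSpace ℝ (Fin n) × ℝ) 1 := by
    simp [hy, norm_smul, abs_of_pos (inv_pos.2 hnx), inv_mul_cancel₀ hnx.ne']
  have hxy : x = ‖x‖ • y := by rw [hy, smul_smul, mul_inv_cancel₀ hnx.ne', one_smul]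
  have := fderiv_hom_aux hdiff hhom hnx hy0 v
  rw [← hxy] at this
  rw [this]
  have h1 : ‖fderiv ℝ H y v‖ ≤ (max C 0) * ‖v‖ :=
    le_trans ((fderiv ℝ H y).le_opNorm v)
      (mul_le_mul_of_nonneg_right ((hC y hys).trans (le_max_left _ _)) (norm_nonneg _))
  rw [norm_mul, norm_inv, norm_pow, Real.norm_of_nonneg hnx.le]
  rw [div_eq_mul_inv, mul_comm ((max C 0) * ‖v‖) _]
  exact mul_le_mul_of_nonneg_left h1 (by positivity)

theorem norm_H_bound
    (hdiff : ∀ x : EuclideanSpace ℝ (Fin n) × ℝ, x ≠ 0 → DifferentiableAt ℝ H x)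
    (hhom : ∀ l : ℝ, 0 < l → ∀ x : EuclideanSpace ℝ (Fin n) × ℝ, x ≠ 0 →
        H (l • x) = l ^ (-(n : ℝ)) * H x) :
    ∃ C : ℝ, 0 ≤ C ∧ ∀ x : EuclideanSpace ℝ (Fin n) × ℝ, x ≠ 0 →
      ‖H x‖ ≤ C / ‖x‖ ^ n := by
  obtain ⟨C, hC⟩ : ∃ C, ∀ x ∈ sphere (0 : EuclideanSpace ℝ (Fin n) × ℝ) 1, ‖H x‖ ≤ C := by
    apply (isCompact_sphere 0 1).exists_bound_of_continuousOn
    intro x hx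
    have hx0 : x ≠ 0 := by
      simp only [mem_sphere_iff_norm, sub_zero] at hx
      intro h; rw [h] at hx; simp at hx
    exact ((hdiff x hx0).continuousAt).continuousWithinAt
  refine ⟨max C 0, le_max_right _ _, fun x hx => ?_⟩
  have hnx : 0 < ‖x‖ := norm_pos_iff.2 hx
  set y : EuclideanSpace ℝ (Fin n) × ℝ := ‖x‖⁻¹ • x with hy
  have hy0 : y ≠ 0 := smul_ne_zero (by positivity) hx
  have hys : y ∈ sphere (0 : EuclideanSpace ℝ (Fin n) × ℝ) 1 := by
    simp [hy, norm_smul, abs_of_pos (inv_pos.2 hnx), inv_mul_cancel₀ hnx.ne']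
  have hxy : H x = ‖x‖ ^ (-(n:ℝ)) * H y := by
    have := hhom ‖x‖ hnx y hy0
    rw [hy, smul_smul, mul_inv_cancel₀ hnx.ne', one_smul] at this
    exact this
  rw [hxy, norm_mul]
  have h1 : ‖H y‖ ≤ max C 0 := (hC y hys).trans (le_max_left _ _)
  have h2 : ‖‖x‖ ^ (-(n:ℝ))‖ = (‖x‖ ^ n)⁻¹ := by
    rw [Real.rpow_neg hnx.le, Real.rpow_natCast, Real.norm_of_nonneg (by positivity)]
  rw [h2, div_eq_mul_inv]
  have : (0:ℝ) < (‖x‖ ^ n)⁻¹ ∨ (0:ℝ) ≤ (‖x‖^n)⁻¹ := Or.inr (by positivity)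
  calc (‖x‖ ^ n)⁻¹ * ‖H y‖ = ‖H y‖ * (‖x‖ ^ n)⁻¹ := mul_comm _ _
    _ ≤ (max C 0) * (‖x‖ ^ n)⁻¹ := mul_le_mul_of_nonneg_right h1 (by positivity)

theorem integrable_aux {r : ℝ} (hr : 0 < r) :
    Integrable (fun y : EuclideanSpace ℝ (Fin n) => ((max ‖y‖ r) ^ (n + 1))⁻¹) := by
  set ε := min r 1 with hε
  have hε0 : 0 < ε := lt_min hr one_pos
  have hb : ∀ y : EuclideanSpace ℝ (Fin n),
      ((max ‖y‖ r) ^ (n + 1))⁻¹ ≤ (2/ε) ^ (n+1) * (1 + ‖y‖) ^ (-((n:ℝ)+1)) := by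
    intro y
    have hkey : ε / 2 * (1 + ‖y‖) ≤ max ‖y‖ r := by
      rcases le_total ‖y‖ 1 with h | h
      · have : ε / 2 * (1 + ‖y‖) ≤ ε := by nlinarith [norm_nonneg y]
        exact this.trans ((min_le_left r 1).trans (le_max_right _ _))
      · have h1 : ε ≤ 1 := min_le_right r 1
        have : ε / 2 * (1 + ‖y‖) ≤ ‖y‖ := by nlinarith
        exact this.trans (le_max_left _ _)
    have h2 : (1 + ‖y‖) ^ (-((n:ℝ)+1)) = ((1 + ‖y‖) ^ (n+1))⁻¹ := by
      rw [show -((n:ℝ)+1) = -(((n+1):ℕ):ℝ) by push_cast; ring,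
        Real.rpow_neg (by positivity), Real.rpow_natCast]
    rw [h2]
    have h5 : (max ‖y‖ r)⁻¹ ≤ (2/ε) * (1+‖y‖)⁻¹ := by
      have h6 : (max ‖y‖ r)⁻¹ ≤ (ε/2*(1+‖y‖))⁻¹ := by
        apply inv_anti₀ (by positivity) hkey
      rw [mul_inv, inv_div] at h6
      exact h6
    rw [← inv_pow, ← inv_pow, ← mul_pow]
    exact pow_le_pow_left₀ (by positivity) h5 _
  have hint : Integrable (fun y : EuclideanSpace ℝ (Fin n) =>
      (2/ε) ^ (n+1) * (1 + ‖y‖) ^ (-((n:ℝ)+1))) := by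
    apply Integrable.const_mul
    apply integrable_one_add_norm
    rw [finrank_euclideanSpace_fin]
    exact by push_cast; linarith
  have hcont : Continuous (fun y : EuclideanSpace ℝ (Fin n) => ((max ‖y‖ r) ^ (n + 1))⁻¹) := by
    apply Continuous.inv₀
    · exact (continuous_norm.max continuous_const).pow _
    · intro y
      have : 0 < max ‖y‖ r := lt_max_of_lt_right hr
      positivity
  refine hint.mono' hcont.aestronglyMeasurable ?_
  filter_upwards with y
  rw [Real.norm_of_nonneg (by positivity)]
  exact hb y

theorem continuous_fderiv_slice
    (hC1 : ContinuousOn (fderiv ℝ H) {x | x ≠ 0})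
    {s : ℝ} (hs : s ≠ 0) (v : EuclideanSpace ℝ (Fin n) × ℝ) :
    Continuous (fun y : EuclideanSpace ℝ (Fin n) => fderiv ℝ H (y, s) v) := by
  have h1 : Continuous (fun y : EuclideanSpace ℝ (Fin n) => fderiv ℝ H (y, s)) := by
    apply hC1.comp_continuous (continuous_id.prodMk continuous_const)
    intro y
    exact fun h => hs (congrArg Prod.snd h)
  exact h1.clm_apply continuous_const

theorem continuous_H_slice
    (hdiff : ∀ x : EuclideanSpace ℝ (Fin n) × ℝ, x ≠ 0 → DifferentiableAt ℝ H x)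
    {s : ℝ} (hs : s ≠ 0) :
    Continuous (fun y : EuclideanSpace ℝ (Fin n) => H (y, s)) := by
  have hcont : ContinuousOn H {x | x ≠ 0} := fun x hx =>
    ((hdiff x hx).continuousAt).continuousWithinAt
  apply hcont.comp_continuous (continuous_id.prodMk continuous_const)
  intro y
  exact fun h => hs (congrArg Prod.snd h)

theorem integrable_fderiv_slice
    (hdiff : ∀ x : EuclideanSpace ℝ (Fin n) × ℝ, x ≠ 0 → DifferentiableAt ℝ H x)
    (hC1 : ContinuousOn (fderiv ℝ H) {x | x ≠ 0})
    (hhom : ∀ l : ℝ, 0 < l → ∀ x : EuclideanSpace ℝ (Fin n) × ℝ, x ≠ 0 →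
        H (l • x) = l ^ (-(n : ℝ)) * H x)
    {s : ℝ} (hs : s ≠ 0) (v : EuclideanSpace ℝ (Fin n) × ℝ) :
    Integrable (fun y : EuclideanSpace ℝ (Fin n) => fderiv ℝ H (y, s) v) := by
  obtain ⟨C, hC0, hC⟩ := norm_fderiv_bound hdiff hC1 hhom
  have habs : 0 < |s| := abs_pos.2 hs
  refine ((integrable_aux habs).const_mul (C * ‖v‖)).mono'
    (continuous_fderiv_slice hC1 hs v).aestronglyMeasurable ?_
  filter_upwards with y
  have hys : ((y, s) : EuclideanSpace ℝ (Fin n) × ℝ) ≠ 0 :=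
    fun h => hs (congrArg Prod.snd h)
  have h1 := hC (y, s) hys v
  have h2 : ‖((y,s) : EuclideanSpace ℝ (Fin n) × ℝ)‖ = max ‖y‖ |s| := by
    rw [Prod.norm_def]; rfl
  rw [h2] at h1
  calc ‖fderiv ℝ H (y, s) v‖ ≤ C * ‖v‖ / (max ‖y‖ |s|) ^ (n+1) := h1
    _ = C * ‖v‖ * ((max ‖y‖ |s|) ^ (n+1))⁻¹ := by rw [div_eq_mul_inv]

theorem hasDerivAt_H_slice
    (hdiff : ∀ x : EuclideanSpace ℝ (Fin n) × ℝ, x ≠ 0 → DifferentiableAt ℝ H x)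
    {y : EuclideanSpace ℝ (Fin n)} {s : ℝ} (h : ((y, s) : EuclideanSpace ℝ (Fin n) × ℝ) ≠ 0) :
    HasDerivAt (fun σ => H (y, σ)) (fderiv ℝ H (y, s) (0, 1)) s := by
  have h1 : HasDerivAt (fun σ : ℝ => ((y, σ) : EuclideanSpace ℝ (Fin n) × ℝ))
      ((0 : EuclideanSpace ℝ (Fin n)), (1:ℝ)) s :=
    HasDerivAt.prodMk (hasDerivAt_const s y) (hasDerivAt_id s)
  exact (hdiff (y, s) h).hasFDerivAt.comp_hasDerivAt s h1

/-- Mean value bound for the difference of two slices, valid for `y ≠ 0`. -/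
theorem diff_slice_bound
    (hdiff : ∀ x : EuclideanSpace ℝ (Fin n) × ℝ, x ≠ 0 → DifferentiableAt ℝ H x)
    {C : ℝ} (hC0 : 0 ≤ C) (hC : ∀ x : EuclideanSpace ℝ (Fin n) × ℝ, x ≠ 0 → ∀ v,
      ‖fderiv ℝ H x v‖ ≤ C * ‖v‖ / ‖x‖ ^ (n + 1))
    {s₁ s₂ : ℝ} {y : EuclideanSpace ℝ (Fin n)} (hy : y ≠ 0) :
    ‖H (y, s₂) - H (y, s₁)‖ ≤ C / ‖y‖ ^ (n+1) * |s₂ - s₁| := by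
  have hny : 0 < ‖y‖ := norm_pos_iff.2 hy
  have key : ∀ σ ∈ Set.uIcc s₁ s₂, HasDerivWithinAt (fun σ => H (y, σ))
      (fderiv ℝ H (y, σ) (0, 1)) (Set.uIcc s₁ s₂) σ := by
    intro σ _
    have hyσ : ((y, σ) : EuclideanSpace ℝ (Fin n) × ℝ) ≠ 0 :=
      fun h => hy (congrArg Prod.fst h)
    exact (hasDerivAt_H_slice hdiff hyσ).hasDerivWithinAt
  have bnd : ∀ σ ∈ Set.uIcc s₁ s₂, ‖fderiv ℝ H (y, σ) (0, 1)‖ ≤ C / ‖y‖ ^ (n+1) := by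
    intro σ _
    have hyσ : ((y, σ) : EuclideanSpace ℝ (Fin n) × ℝ) ≠ 0 :=
      fun h => hy (congrArg Prod.fst h)
    have h1 := hC (y, σ) hyσ (0, 1)
    have h2 : ‖((0, 1) : EuclideanSpace ℝ (Fin n) × ℝ)‖ = 1 := by
      rw [Prod.norm_def]
      simp
    rw [h2, mul_one] at h1
    refine h1.trans ?_
    have h3 : ‖y‖ ^ (n+1) ≤ ‖((y, σ) : EuclideanSpace ℝ (Fin n) × ℝ)‖ ^ (n+1) := by
      apply pow_le_pow_left₀ hny.le
      rw [Prod.norm_def]; exact le_max_left _ _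
    rw [div_eq_mul_inv, div_eq_mul_inv]
    exact mul_le_mul_of_nonneg_left (inv_anti₀ (by positivity) h3) hC0
  have := (convex_uIcc s₁ s₂).norm_image_sub_le_of_norm_hasDerivWithin_le key bnd
    (Set.left_mem_uIcc) (Set.right_mem_uIcc)
  simpa [Real.norm_eq_abs] using this

theorem integrable_diff_slice
    (hdiff : ∀ x : EuclideanSpace ℝ (Fin n) × ℝ, x ≠ 0 → DifferentiableAt ℝ H x)
    (hC1 : ContinuousOn (fderiv ℝ H) {x | x ≠ 0})
    (hhom : ∀ l : ℝ, 0 < l → ∀ x : EuclideanSpace ℝ (Fin n) × ℝ, x ≠ 0 →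
        H (l • x) = l ^ (-(n : ℝ)) * H x)
    {s₁ s₂ : ℝ} (h₁ : s₁ ≠ 0) (h₂ : s₂ ≠ 0) :
    Integrable (fun y : EuclideanSpace ℝ (Fin n) => H (y, s₂) - H (y, s₁)) := by
  obtain ⟨C, hC0, hC⟩ := norm_fderiv_bound hdiff hC1 hhom
  have hcont : Continuous (fun y : EuclideanSpace ℝ (Fin n) => H (y, s₂) - H (y, s₁)) :=
    (continuous_H_slice hdiff h₂).sub (continuous_H_slice hdiff h₁)
  rw [← integrableOn_univ, ← Set.union_compl_self (closedBall (0:EuclideanSpace ℝ (Fin n)) 1)]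
  apply IntegrableOn.union
  · exact hcont.continuousOn.integrableOn_compact (isCompact_closedBall _ _)
  · have hmeas : MeasurableSet (closedBall (0:EuclideanSpace ℝ (Fin n)) 1)ᶜ :=
      measurableSet_closedBall.compl
    refine Integrable.mono' (g := fun y : EuclideanSpace ℝ (Fin n) =>
        C * |s₂ - s₁| * ((max ‖y‖ 1) ^ (n+1))⁻¹) ?_ hcont.aestronglyMeasurable.restrict ?_
    · exact ((integrable_aux one_pos).const_mul (C * |s₂ - s₁|)).integrableOn
    · filter_upwards [ae_restrict_mem hmeas] with y hy
      simp only [Set.mem_compl_iff, mem_closedBall, dist_zero_right, not_le] at hy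
      have hy0 : y ≠ 0 := by
        intro h; rw [h] at hy; norm_num at hy
      have h1 := diff_slice_bound hdiff hC0 hC (s₁ := s₁) (s₂ := s₂) hy0
      have h2 : max ‖y‖ 1 = ‖y‖ := max_eq_left hy.le
      rw [h2]
      calc ‖H (y, s₂) - H (y, s₁)‖ ≤ C / ‖y‖ ^ (n+1) * |s₂ - s₁| := h1
        _ = C * |s₂ - s₁| * (‖y‖ ^ (n+1))⁻¹ := by ring

theorem D_scale
    (hhom : ∀ l : ℝ, 0 < l → ∀ x : EuclideanSpace ℝ (Fin n) × ℝ, x ≠ 0 →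
        H (l • x) = l ^ (-(n : ℝ)) * H x)
    {l : ℝ} (hl : 0 < l) {s₁ s₂ : ℝ} (h₁ : s₁ ≠ 0) (h₂ : s₂ ≠ 0) :
    ∫ y : EuclideanSpace ℝ (Fin n), (H (y, l * s₂) - H (y, l * s₁)) =
      ∫ y : EuclideanSpace ℝ (Fin n), (H (y, s₂) - H (y, s₁)) := by
  have key : ∀ (s : ℝ), s ≠ 0 → ∀ y : EuclideanSpace ℝ (Fin n),
      H (y, l * s) = l ^ (-(n : ℝ)) * H (l⁻¹ • y, s) := by
    intro s hs y
    have h0 : ((l⁻¹ • y, s) : EuclideanSpace ℝ (Fin n) × ℝ) ≠ 0 :=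
      fun h => hs (congrArg Prod.snd h)
    have := hhom l hl _ h0
    have heq : (l • ((l⁻¹ • y, s) : EuclideanSpace ℝ (Fin n) × ℝ)) = (y, l * s) := by
      rw [Prod.smul_mk, smul_smul, mul_inv_cancel₀ hl.ne', one_smul, smul_eq_mul]
    rw [heq] at this
    exact this
  calc ∫ y : EuclideanSpace ℝ (Fin n), (H (y, l * s₂) - H (y, l * s₁))
      = ∫ y : EuclideanSpace ℝ (Fin n),
          l ^ (-(n:ℝ)) * ((fun z : EuclideanSpace ℝ (Fin n) => H (z, s₂) - H (z, s₁)) (l⁻¹ • y)) := by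
        congr 1; funext y
        rw [key s₂ h₂ y, key s₁ h₁ y]; ring
    _ = l ^ (-(n:ℝ)) * ∫ y : EuclideanSpace ℝ (Fin n),
          (fun z : EuclideanSpace ℝ (Fin n) => H (z, s₂) - H (z, s₁)) (l⁻¹ • y) :=
        integral_const_mul _ _
    _ = l ^ (-(n:ℝ)) * (|l ^ Module.finrank ℝ (EuclideanSpace ℝ (Fin n))| •
          ∫ y : EuclideanSpace ℝ (Fin n), (H (y, s₂) - H (y, s₁))) := by
        rw [Measure.integral_comp_inv_smul volume
          (fun z : EuclideanSpace ℝ (Fin n) => H (z, s₂) - H (z, s₁)) l]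
    _ = ∫ y : EuclideanSpace ℝ (Fin n), (H (y, s₂) - H (y, s₁)) := by
        rw [smul_eq_mul, finrank_euclideanSpace_fin, ← mul_assoc]
        rw [abs_of_pos (pow_pos hl n), Real.rpow_neg hl.le, Real.rpow_natCast]
        rw [inv_mul_cancel₀ (pow_pos hl n).ne', one_mul]

theorem D_neg
    (hodd : ∀ x, H (-x) = -H x) (s₁ s₂ : ℝ) :
    ∫ y : EuclideanSpace ℝ (Fin n), (H (y, -s₂) - H (y, -s₁)) =
      - ∫ y : EuclideanSpace ℝ (Fin n), (H (y, s₂) - H (y, s₁)) := by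
  have h1 : ∀ y : EuclideanSpace ℝ (Fin n), ∀ s : ℝ, H (-y, -s) = - H (y, s) := by
    intro y s
    have := hodd (y, s)
    rwa [show (-((y,s) : EuclideanSpace ℝ (Fin n) × ℝ)) = (-y, -s) from rfl] at this
  calc ∫ y : EuclideanSpace ℝ (Fin n), (H (y, -s₂) - H (y, -s₁))
      = ∫ y : EuclideanSpace ℝ (Fin n),
          (fun z : EuclideanSpace ℝ (Fin n) => H (z, -s₂) - H (z, -s₁)) (-y) := by
        exact (integral_neg_eq_self
          (fun z : EuclideanSpace ℝ (Fin n) => H (z, -s₂) - H (z, -s₁)) volume).symm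
    _ = ∫ y : EuclideanSpace ℝ (Fin n), -(H (y, s₂) - H (y, s₁)) := by
        congr 1; funext y
        simp only [h1]; ring
    _ = - ∫ y : EuclideanSpace ℝ (Fin n), (H (y, s₂) - H (y, s₁)) := integral_neg _

theorem D_add
    (hdiff : ∀ x : EuclideanSpace ℝ (Fin n) × ℝ, x ≠ 0 → DifferentiableAt ℝ H x)
    (hC1 : ContinuousOn (fderiv ℝ H) {x | x ≠ 0})
    (hhom : ∀ l : ℝ, 0 < l → ∀ x : EuclideanSpace ℝ (Fin n) × ℝ, x ≠ 0 →
        H (l • x) = l ^ (-(n : ℝ)) * H x)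
    {a b c : ℝ} (ha : a ≠ 0) (hb : b ≠ 0) (hc : c ≠ 0) :
    ∫ y : EuclideanSpace ℝ (Fin n), (H (y, c) - H (y, a)) =
      (∫ y : EuclideanSpace ℝ (Fin n), (H (y, b) - H (y, a))) +
      ∫ y : EuclideanSpace ℝ (Fin n), (H (y, c) - H (y, b)) := by
  rw [← integral_add (integrable_diff_slice hdiff hC1 hhom ha hb)
    (integrable_diff_slice hdiff hC1 hhom hb hc)]
  congr 1; funext y; ring

theorem D_zero
    (hdiff : ∀ x : EuclideanSpace ℝ (Fin n) × ℝ, x ≠ 0 → DifferentiableAt ℝ H x)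
    (hC1 : ContinuousOn (fderiv ℝ H) {x | x ≠ 0})
    (hodd : ∀ x, H (-x) = -H x)
    (hhom : ∀ l : ℝ, 0 < l → ∀ x : EuclideanSpace ℝ (Fin n) × ℝ, x ≠ 0 →
        H (l • x) = l ^ (-(n : ℝ)) * H x)
    {a b : ℝ} (ha : 0 < a) (hb : 0 < b) :
    ∫ y : EuclideanSpace ℝ (Fin n), (H (y, b) - H (y, a)) = 0 := by
  -- reduce to `a = 1`
  set l := b / a with hl
  have hl0 : 0 < l := div_pos hb ha
  have hredux : ∫ y : EuclideanSpace ℝ (Fin n), (H (y, b) - H (y, a)) =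
      ∫ y : EuclideanSpace ℝ (Fin n), (H (y, l) - H (y, 1)) := by
    have := D_scale (H := H) hhom ha one_ne_zero hl0.ne'
    rw [mul_one, show a * l = b by rw [hl]; field_simp] at this
    exact this.symm.symm
  rw [hredux]
  -- now the symmetry argument
  have e1 : ∫ y : EuclideanSpace ℝ (Fin n), (H (y, l) - H (y, -1)) =
      (∫ y : EuclideanSpace ℝ (Fin n), (H (y, 1) - H (y, -1))) +
      ∫ y : EuclideanSpace ℝ (Fin n), (H (y, l) - H (y, 1)) :=
    D_add hdiff hC1 hhom (by norm_num) one_ne_zero hl0.ne'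
  have e2 : ∫ y : EuclideanSpace ℝ (Fin n), (H (y, l) - H (y, -1)) =
      ∫ y : EuclideanSpace ℝ (Fin n), (H (y, 1) - H (y, -(1/l))) := by
    have := D_scale (H := H) hhom hl0 (show -(1/l) ≠ 0 from neg_ne_zero.2 (by positivity)) one_ne_zero
    rw [mul_one, show l * -(1/l) = -1 by field_simp] at this
    exact this
  have e3 : ∫ y : EuclideanSpace ℝ (Fin n), (H (y, 1) - H (y, -(1/l))) =
      (∫ y : EuclideanSpace ℝ (Fin n), (H (y, -1) - H (y, -(1/l)))) +
      ∫ y : EuclideanSpace ℝ (Fin n), (H (y, 1) - H (y, -1)) :=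
    D_add hdiff hC1 hhom (show -(1/l) ≠ 0 from neg_ne_zero.2 (by positivity)) (by norm_num) one_ne_zero
  have e4 : ∫ y : EuclideanSpace ℝ (Fin n), (H (y, -1) - H (y, -(1/l))) =
      - ∫ y : EuclideanSpace ℝ (Fin n), (H (y, 1) - H (y, 1/l)) :=
    D_neg hodd (1/l) 1
  have e5 : ∫ y : EuclideanSpace ℝ (Fin n), (H (y, 1) - H (y, 1/l)) =
      ∫ y : EuclideanSpace ℝ (Fin n), (H (y, l) - H (y, 1)) := by
    have := D_scale (H := H) hhom hl0 (show (1:ℝ)/l ≠ 0 by positivity) one_ne_zero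
    rw [mul_one, mul_one_div, div_self hl0.ne'] at this
    exact this.symm
  linarith [e1, e2, e3, e4, e5]

theorem lemC
    (hdiff : ∀ x : EuclideanSpace ℝ (Fin n) × ℝ, x ≠ 0 → DifferentiableAt ℝ H x)
    (hC1 : ContinuousOn (fderiv ℝ H) {x | x ≠ 0})
    (hodd : ∀ x, H (-x) = -H x)
    (hhom : ∀ l : ℝ, 0 < l → ∀ x : EuclideanSpace ℝ (Fin n) × ℝ, x ≠ 0 →
        H (l • x) = l ^ (-(n : ℝ)) * H x)
    {t : ℝ} (ht : 0 < t) :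
    ∫ y : EuclideanSpace ℝ (Fin n), fderiv ℝ H (y, t) (0, 1) = 0 := by
  obtain ⟨C, hC0, hC⟩ := norm_fderiv_bound hdiff hC1 hhom
  have ht2 : 0 < t/2 := half_pos ht
  have hball : ∀ s ∈ ball t (t/2), t/2 < s := by
    intro s hs
    rw [mem_ball, Real.dist_eq, abs_lt] at hs
    linarith [hs.1]
  have key := hasDerivAt_integral_of_dominated_loc_of_deriv_le (μ := volume)
    (F := fun s (y : EuclideanSpace ℝ (Fin n)) => H (y, s) - H (y, t))
    (F' := fun s (y : EuclideanSpace ℝ (Fin n)) => fderiv ℝ H (y, s) (0, 1))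
    (x₀ := t) (bound := fun y => C * ((max ‖y‖ (t/2)) ^ (n+1))⁻¹) (ball_mem_nhds t ht2)
    ?_ ?_ ?_ ?_ ?_ ?_
  · -- conclude
    obtain ⟨-, hD⟩ := key
    have hzero : (fun s => ∫ y : EuclideanSpace ℝ (Fin n), (H (y, s) - H (y, t)))
        =ᶠ[nhds t] (fun _ => (0:ℝ)) := by
      filter_upwards [ball_mem_nhds t ht2] with s hs
      exact D_zero hdiff hC1 hodd hhom ht (ht2.trans (hball s hs))
    have h0 : HasDerivAt (fun s => ∫ y : EuclideanSpace ℝ (Fin n), (H (y, s) - H (y, t))) 0 t :=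
      (hasDerivAt_const t (0:ℝ)).congr_of_eventuallyEq hzero
    exact hD.unique h0
  · -- hF_meas
    filter_upwards [ball_mem_nhds t ht2] with s hs
    exact (((continuous_H_slice hdiff (ht2.trans (hball s hs)).ne').sub
      (continuous_H_slice hdiff ht.ne'))).aestronglyMeasurable
  · -- hF_int
    exact integrable_diff_slice hdiff hC1 hhom ht.ne' ht.ne'
  · -- hF'_meas
    exact (continuous_fderiv_slice hC1 ht.ne' _).aestronglyMeasurable
  · -- h_bound
    filter_upwards with y
    intro s hs
    have hst : t/2 < s := hball s hs
    have hys : ((y, s) : EuclideanSpace ℝ (Fin n) × ℝ) ≠ 0 :=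
      fun h => (ht2.trans hst).ne' (congrArg Prod.snd h)
    have h1 := hC (y, s) hys (0, 1)
    have h2 : ‖((0, 1) : EuclideanSpace ℝ (Fin n) × ℝ)‖ = 1 := by
      rw [Prod.norm_def]; simp
    rw [h2, mul_one] at h1
    refine h1.trans ?_
    rw [div_eq_mul_inv]
    apply mul_le_mul_of_nonneg_left _ hC0
    apply inv_anti₀ (by positivity)
    apply pow_le_pow_left₀ (by positivity)
    rw [Prod.norm_def]
    exact max_le_max le_rfl (le_trans (le_of_lt hst) (le_abs_self s))
  · -- bound_integrable
    exact (integrable_aux ht2).const_mul C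
  · -- h_diff
    filter_upwards with y
    intro s hs
    have hys : ((y, s) : EuclideanSpace ℝ (Fin n) × ℝ) ≠ 0 :=
      fun h => (ht2.trans (hball s hs)).ne' (congrArg Prod.snd h)
    exact (hasDerivAt_H_slice hdiff hys).sub_const _

theorem lemD
    (hdiff : ∀ x : EuclideanSpace ℝ (Fin n) × ℝ, x ≠ 0 → DifferentiableAt ℝ H x)
    (hC1 : ContinuousOn (fderiv ℝ H) {x | x ≠ 0})
    (hhom : ∀ l : ℝ, 0 < l → ∀ x : EuclideanSpace ℝ (Fin n) × ℝ, x ≠ 0 →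
        H (l • x) = l ^ (-(n : ℝ)) * H x)
    {t : ℝ} (ht : t ≠ 0) (j' : Fin n) :
    ∫ y : EuclideanSpace ℝ (Fin n),
      fderiv ℝ H (y, t) (EuclideanSpace.single j' 1, 0) = 0 := by
  obtain ⟨m, rfl⟩ : ∃ m, n = m + 1 := ⟨n - 1, by have := j'.pos; omega⟩
  obtain ⟨C₀, hC₀0, hC₀⟩ := norm_H_bound hdiff hhom
  set u : EuclideanSpace ℝ (Fin (m+1)) := EuclideanSpace.single j' 1 with hu
  set g : EuclideanSpace ℝ (Fin (m+1)) → ℝ := fun y => fderiv ℝ H (y, t) (u, 0) with hg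
  have hgint : Integrable g := integrable_fderiv_slice hdiff hC1 hhom ht (u, 0)
  set e₁ := (MeasurableEquiv.toLp 2 (Fin (m+1) → ℝ)).symm with he₁
  set e₂ := MeasurableEquiv.piFinSuccAbove (fun _ : Fin (m+1) => ℝ) j' with he₂
  have hmp1 : MeasurePreserving e₁.symm :=
    (EuclideanSpace.volume_preserving_symm_measurableEquiv_toLp _).symm
  have hmp2 : MeasurePreserving e₂.symm :=
    (volume_preserving_piFinSuccAbove (fun _ : Fin (m+1) => ℝ) j').symm
  have step1 : ∫ y, g y = ∫ x : Fin (m+1) → ℝ, g (e₁.symm x) :=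
    (hmp1.integral_comp' g).symm
  have step2 : ∫ x : Fin (m+1) → ℝ, g (e₁.symm x) =
      ∫ p : ℝ × (Fin m → ℝ), g (e₁.symm (e₂.symm p)) :=
    (hmp2.integral_comp' (fun x => g (e₁.symm x))).symm
  have hPint : Integrable (fun p : ℝ × (Fin m → ℝ) => g (e₁.symm (e₂.symm p))) := by
    have h1 : Integrable (fun x : Fin (m+1) → ℝ => g (e₁.symm x)) :=
      (hmp1.integrable_comp_emb e₁.symm.measurableEmbedding).2 hgint
    exact (hmp2.integrable_comp_emb e₂.symm.measurableEmbedding).2 h1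
  rw [step1, step2]
  have hPint' : Integrable (fun p : ℝ × (Fin m → ℝ) => g (e₁.symm (e₂.symm p)))
      ((volume : Measure ℝ).prod (volume : Measure (Fin m → ℝ))) := by
    rwa [← Measure.volume_eq_prod]
  rw [Measure.volume_eq_prod, integral_prod_symm _ hPint']
  rw [← integral_zero (Fin m → ℝ) ℝ (μ := volume)]
  apply integral_congr_ae
  filter_upwards [hPint'.prod_left_ae] with w hw
  -- now the one-dimensional statement
  set cc : EuclideanSpace ℝ (Fin (m+1)) := e₁.symm (e₂.symm (0, w)) with hcc
  have hkey : ∀ x₁ : ℝ, e₁.symm (e₂.symm (x₁, w)) = cc + x₁ • u := by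
    intro x₁
    ext i
    show (Fin.insertNthEquiv (fun _ => ℝ) j') (x₁, w) i
      = (Fin.insertNthEquiv (fun _ => ℝ) j') (0, w) i + x₁ * (EuclideanSpace.single j' 1) i
    simp only [Fin.insertNthEquiv_apply]
    refine Fin.succAboveCases j' ?_ ?_ i
    · simp [Fin.insertNth_apply_same, EuclideanSpace.single_apply]
    · intro k
      simp [Fin.insertNth_apply_succAbove, EuclideanSpace.single_apply,
        Fin.succAbove_ne j' k]
  set d : ℝ → ℝ := fun x₁ => fderiv ℝ H (cc + x₁ • u, t) (u, 0) with hd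
  have hGd : (fun x₁ : ℝ => g (e₁.symm (e₂.symm (x₁, w)))) = d := by
    funext x₁; rw [hg]; simp only; rw [hkey x₁]
  set φ : ℝ → ℝ := fun x₁ => H (cc + x₁ • u, t) with hφ
  have hne : ∀ x₁ : ℝ, ((cc + x₁ • u, t) : EuclideanSpace ℝ (Fin (m+1)) × ℝ) ≠ 0 :=
    fun x₁ h => ht (congrArg Prod.snd h)
  have hderiv : ∀ x₁ : ℝ, HasDerivAt φ (d x₁) x₁ := by
    intro x₁
    have h1 : HasDerivAt (fun x : ℝ => cc + x • u) u x₁ := by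
      simpa using ((hasDerivAt_id x₁).smul_const u).const_add cc
    have h2 : HasDerivAt (fun x : ℝ =>
        ((cc + x • u, t) : EuclideanSpace ℝ (Fin (m+1)) × ℝ)) (u, 0) x₁ :=
      h1.prodMk (hasDerivAt_const x₁ t)
    exact (hdiff _ (hne x₁)).hasFDerivAt.comp_hasDerivAt x₁ h2
  have hwd : Integrable d := by rwa [hGd] at hw
  -- decay of φ
  have hbnd : ∀ x : ℝ, ‖cc‖ + 1 ≤ |x| → ‖φ x‖ ≤ C₀ / (|x| - ‖cc‖) ^ (m+1) := by
    intro x hx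
    have hnu : ‖u‖ = 1 := by rw [hu, EuclideanSpace.norm_single, norm_one]
    have h2 : ‖x • u‖ ≤ ‖cc + x • u‖ + ‖cc‖ := by
      calc ‖x • u‖ = ‖(cc + x • u) - cc‖ := by congr 1; abel
        _ ≤ ‖cc + x • u‖ + ‖cc‖ := norm_sub_le _ _
    rw [norm_smul, hnu, mul_one, Real.norm_eq_abs] at h2
    have h3 : |x| - ‖cc‖ ≤ ‖cc + x • u‖ := by linarith
    have h4 := hC₀ _ (hne x)
    rw [hφ]
    refine h4.trans ?_
    rw [div_eq_mul_inv, div_eq_mul_inv]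
    apply mul_le_mul_of_nonneg_left _ hC₀0
    apply inv_anti₀ (pow_pos (by linarith) _)
    apply pow_le_pow_left₀ (by linarith)
    refine h3.trans ?_
    rw [Prod.norm_def]
    exact le_max_left _ _
  have hauxlim : Tendsto (fun r : ℝ => C₀ / (r - ‖cc‖) ^ (m+1)) atTop (𝓝 0) := by
    have h1 : Tendsto (fun r : ℝ => r - ‖cc‖) atTop atTop :=
      tendsto_atTop_add_const_right _ _ tendsto_id
    have h2 := (tendsto_pow_atTop (Nat.succ_ne_zero m)).comp h1
    have h3 := tendsto_inv_atTop_zero.comp h2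
    have h4 := h3.const_mul C₀
    simp only [Function.comp_def, mul_zero] at h4
    simpa [div_eq_mul_inv] using h4
  have hlimtop : Tendsto φ atTop (𝓝 0) := by
    apply squeeze_zero_norm' ?_ (hauxlim.comp tendsto_abs_atTop_atTop)
    filter_upwards [tendsto_abs_atTop_atTop.eventually_ge_atTop (‖cc‖ + 1)] with x hx
    exact hbnd x hx
  have hlimbot : Tendsto φ atBot (𝓝 0) := by
    apply squeeze_zero_norm' ?_ (hauxlim.comp tendsto_abs_atBot_atTop)
    filter_upwards [tendsto_abs_atBot_atTop.eventually_ge_atTop (‖cc‖ + 1)] with x hx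
    exact hbnd x hx
  have hIoi : ∫ x in Set.Ioi (0:ℝ), d x = 0 - φ 0 :=
    integral_Ioi_of_hasDerivAt_of_tendsto (hderiv 0).continuousAt.continuousWithinAt
      (fun x _ => hderiv x) hwd.integrableOn hlimtop
  have hIic : ∫ x in Set.Iic (0:ℝ), d x = φ 0 - 0 :=
    integral_Iic_of_hasDerivAt_of_tendsto (hderiv 0).continuousAt.continuousWithinAt
      (fun x _ => hderiv x) hwd.integrableOn hlimbot
  have hsum := intervalIntegral.integral_Iic_add_Ioi (b := (0:ℝ)) (f := d) (μ := volume)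
    hwd.integrableOn hwd.integrableOn
  rw [hGd]
  rw [← hsum, hIoi, hIic]
  ring

theorem main_aux
    (hdiff : ∀ x : EuclideanSpace ℝ (Fin n) × ℝ, x ≠ 0 → DifferentiableAt ℝ H x)
    (hC1 : ContinuousOn (fderiv ℝ H) {x | x ≠ 0})
    (hodd : ∀ x, H (-x) = -H x)
    (hhom : ∀ l : ℝ, 0 < l → ∀ x : EuclideanSpace ℝ (Fin n) × ℝ, x ≠ 0 →
        H (l • x) = l ^ (-(n : ℝ)) * H x)
    {t : ℝ} (ht : 0 < t) (v : EuclideanSpace ℝ (Fin n) × ℝ)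
    (h1 : ∫ y : EuclideanSpace ℝ (Fin n), fderiv ℝ H (y, t) (v.1, 0) = 0) :
    ∫ y : EuclideanSpace ℝ (Fin n), fderiv ℝ H (y, t) v = 0 := by
  have hdec : ∀ y : EuclideanSpace ℝ (Fin n), fderiv ℝ H (y, t) v =
      fderiv ℝ H (y, t) (v.1, 0) + v.2 * fderiv ℝ H (y, t) (0, 1) := by
    intro y
    have hv : v = (v.1, (0:ℝ)) + v.2 • ((0 : EuclideanSpace ℝ (Fin n)), (1:ℝ)) := by
      apply Prod.ext <;> simp
    calc fderiv ℝ H (y, t) v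
        = fderiv ℝ H (y, t) ((v.1, (0:ℝ)) + v.2 • ((0 : EuclideanSpace ℝ (Fin n)), (1:ℝ))) := by
          rw [← hv]
      _ = fderiv ℝ H (y, t) (v.1, 0) + v.2 * fderiv ℝ H (y, t) (0, 1) := by
          rw [map_add, ContinuousLinearMap.map_smul, smul_eq_mul]
  rw [show (fun y : EuclideanSpace ℝ (Fin n) => fderiv ℝ H (y, t) v) = fun y =>
    fderiv ℝ H (y, t) (v.1, 0) + v.2 * fderiv ℝ H (y, t) (0, 1) from funext hdec]
  rw [integral_add (integrable_fderiv_slice hdiff hC1 hhom ht.ne' _)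
    ((integrable_fderiv_slice hdiff hC1 hhom ht.ne' _).const_mul _)]
  rw [integral_const_mul, h1, lemC hdiff hC1 hodd hhom ht]
  ring

end Main

/-- If `G ∈ C¹(ℝ^{n+1} \ {0})` is odd and positively homogeneous of degree `-n`, and
`F = ∂_j G` is a first-order coordinate partial derivative of `G`, then for every
`a ∈ ℝⁿ` and `t > 0`: `∫_{ℝⁿ} F(y, a·y + t) dy = 0`. -/
theorem integral_partial_homogeneous_eq_zero (n : ℕ)
    (G : EuclideanSpace ℝ (Fin n) × ℝ → ℝ)
    (hdiff : ∀ x : EuclideanSpace ℝ (Fin n) × ℝ, x ≠ 0 → DifferentiableAt ℝ G x)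
    (hC1 : ContinuousOn (fderiv ℝ G) {x | x ≠ 0})
    (hodd : ∀ x, G (-x) = -G x)
    (hhom : ∀ l : ℝ, 0 < l → ∀ x : EuclideanSpace ℝ (Fin n) × ℝ, x ≠ 0 →
        G (l • x) = l ^ (-(n : ℝ)) * G x)
    (j : Fin (n + 1)) (v : EuclideanSpace ℝ (Fin n) × ℝ)
    (hv : v = if h : (j : ℕ) < n then (EuclideanSpace.single (⟨(j : ℕ), h⟩ : Fin n) (1 : ℝ), (0 : ℝ))
        else (0, 1))
    (a : EuclideanSpace ℝ (Fin n)) (t : ℝ) (ht : 0 < t) :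
    (∫ y : EuclideanSpace ℝ (Fin n), fderiv ℝ G (y, ⟪a, y⟫ + t) v) = 0 := by
  set A : (EuclideanSpace ℝ (Fin n) × ℝ) →L[ℝ] (EuclideanSpace ℝ (Fin n) × ℝ) :=
    (ContinuousLinearMap.fst ℝ _ _).prod ((ContinuousLinearMap.snd ℝ _ _) +
      (innerSL ℝ a).comp (ContinuousLinearMap.fst ℝ _ _)) with hA
  have hAapp : ∀ p : EuclideanSpace ℝ (Fin n) × ℝ, A p = (p.1, p.2 + ⟪a, p.1⟫) :=
    fun p => rfl
  have hAinj : ∀ p, A p = 0 → p = 0 := by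
    intro p hp
    rw [hAapp] at hp
    have h1 : p.1 = 0 := congrArg Prod.fst hp
    have h2 : p.2 + ⟪a, p.1⟫ = 0 := congrArg Prod.snd hp
    rw [h1, inner_zero_right, add_zero] at h2
    exact Prod.ext h1 h2
  have hAne : ∀ p : EuclideanSpace ℝ (Fin n) × ℝ, p ≠ 0 → A p ≠ 0 :=
    fun p hp h0 => hp (hAinj p h0)
  set H : EuclideanSpace ℝ (Fin n) × ℝ → ℝ := fun p => G (A p) with hH
  have hdiffH : ∀ x : EuclideanSpace ℝ (Fin n) × ℝ, x ≠ 0 → DifferentiableAt ℝ H x :=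
    fun x hx => (hdiff (A x) (hAne x hx)).comp x A.differentiableAt
  have hfd : ∀ x : EuclideanSpace ℝ (Fin n) × ℝ, x ≠ 0 →
      fderiv ℝ H x = (fderiv ℝ G (A x)).comp A := by
    intro x hx
    have := fderiv_comp x (hdiff (A x) (hAne x hx)) A.differentiableAt
    rw [A.fderiv] at this
    exact this
  have hC1H : ContinuousOn (fderiv ℝ H) {x | x ≠ 0} := by
    apply ContinuousOn.congr (f := fun x => (fderiv ℝ G (A x)).comp A)
      ?_ (fun x hx => hfd x hx)
    apply ContinuousOn.clm_comp ?_ continuousOn_const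
    exact hC1.comp A.continuous.continuousOn (fun x hx => hAne x hx)
  have hoddH : ∀ x, H (-x) = -H x := by
    intro x
    rw [hH]
    simp only
    rw [map_neg]
    exact hodd (A x)
  have hhomH : ∀ l : ℝ, 0 < l → ∀ x : EuclideanSpace ℝ (Fin n) × ℝ, x ≠ 0 →
      H (l • x) = l ^ (-(n : ℝ)) * H x := by
    intro l hl x hx
    rw [hH]
    simp only
    rw [ContinuousLinearMap.map_smul]
    exact hhom l hl (A x) (hAne x hx)
  set w : EuclideanSpace ℝ (Fin n) × ℝ := (v.1, v.2 - ⟪a, v.1⟫) with hw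
  have key : ∀ y : EuclideanSpace ℝ (Fin n),
      fderiv ℝ G (y, ⟪a, y⟫ + t) v = fderiv ℝ H (y, t) w := by
    intro y
    have h1 : ((y, t) : EuclideanSpace ℝ (Fin n) × ℝ) ≠ 0 :=
      fun h => ht.ne' (congrArg Prod.snd h)
    rw [hfd _ h1]
    simp only [ContinuousLinearMap.coe_comp', Function.comp_apply]
    have h2 : A (y, t) = (y, ⟪a, y⟫ + t) := by
      rw [hAapp]; exact Prod.ext rfl (add_comm t _)
    have h3 : A w = v := by
      rw [hw, hAapp]
      exact Prod.ext rfl (by simp)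
    rw [h2, h3]
  rw [show (fun y : EuclideanSpace ℝ (Fin n) => fderiv ℝ G (y, ⟪a, y⟫ + t) v) = fun y =>
    fderiv ℝ H (y, t) w from funext key]
  apply main_aux hdiffH hC1H hoddH hhomH ht
  have hw1 : w.1 = v.1 := rfl
  rw [hw1]
  by_cases h : (j : ℕ) < n
  · have hv1 : v.1 = EuclideanSpace.single (⟨(j : ℕ), h⟩ : Fin n) (1 : ℝ) := by
      rw [hv, dif_pos h]
    rw [hv1]
    exact lemD hdiffH hC1H hhomH ht.ne' _
  · have hv1 : v.1 = 0 := by rw [hv, dif_neg h]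
    rw [hv1]
    have : ∀ y : EuclideanSpace ℝ (Fin n),
        fderiv ℝ H (y, t) ((0 : EuclideanSpace ℝ (Fin n)), (0:ℝ)) = 0 := by
      intro y
      have : ((0 : EuclideanSpace ℝ (Fin n)), (0:ℝ)) =
          (0 : EuclideanSpace ℝ (Fin n) × ℝ) := rfl
      rw [this, map_zero]
    simp only [this, integral_zero]
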